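/- For the GUE kernel, (∂/∂x + ∂/∂y) K_N(x,y) = -(1/(p_{N-1},p_{N-1}))·(ψ_N(x)ψ_{N-1}(y) + ψ_{N-1}(x)ψ_N(y)), where ψ_n(x) = e^{-x²/2}·2^{-n}H_n(x) and K_N(x,y) = Σ_{n=0}^{N-1} ψ_n(x)ψ_n(y)/(p_n,p_n) with (p_n,p_n) = √π·2^{-n}·n!. -/

import Mathlib

open Real Finset

/-- Physicists' Hermite polynomials. -/
noncomputable def physHermite : ℕ → ℝ → ℝ
  | 0 => fun _ => 1
  | 1 => fun x => 2 * x
  | (n + 2) => fun x => 2 * x * physHermite (n + 1) x - 2 * (n + 1) * physHermite n x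

/-- Hermite wave function `ψ_n(x) = e^{-x²/2} 2^{-n} H_n(x)`. -/
noncomputable def psiH (n : ℕ) (x : ℝ) : ℝ :=
  Real.exp (-x ^ 2 / 2) * physHermite n x / 2 ^ n

/-- GUE correlation kernel `K_N(x,y) = Σ_{n<N} ψ_n(x)ψ_n(y) / (√π n!/2ⁿ)`. -/
noncomputable def kerGUE (N : ℕ) (x y : ℝ) : ℝ :=
  ∑ n ∈ Finset.range N, psiH n x * psiH n y / (Real.sqrt Real.pi * (Nat.factorial n) / 2 ^ n)

lemma physHermite_succ' (n : ℕ) (x : ℝ) :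
    physHermite (n + 1) x = 2 * x * physHermite n x - 2 * n * physHermite (n - 1) x := by
  cases n with
  | zero => simp [physHermite]
  | succ m => simp [physHermite]

lemma physHermite_hasDerivAt (n : ℕ) (x : ℝ) :
    HasDerivAt (fun x => physHermite n x) (2 * n * physHermite (n - 1) x) x := by
  induction n using Nat.twoStepInduction generalizing x with
  | zero => simpa [physHermite] using hasDerivAt_const x (1:ℝ)
  | one => simpa [physHermite] using ((hasDerivAt_id x).const_mul (2:ℝ))
  | more n ih2 ih1 =>
    have h := (((hasDerivAt_id x).const_mul (2:ℝ)).mul (ih1 x)).sub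
      ((ih2 x).const_mul (2*((n:ℝ)+1)))
    simp only [id_eq, Nat.add_sub_cancel] at h
    have hcong : (fun x => physHermite (n+2) x) = fun x =>
        2 * x * physHermite (n + 1) x - 2 * ((n:ℝ) + 1) * physHermite n x := by
      funext z; simp [physHermite]
    rw [hcong]
    refine h.congr_deriv ?_
    have key := physHermite_succ' n x
    simp only [show n+2-1 = n+1 from rfl, key]
    push_cast
    ring

lemma psiH_hasDerivAt (n : ℕ) (x : ℝ) :
    HasDerivAt (fun x => psiH n x) (-(psiH (n+1) x) + n / 2 * psiH (n-1) x) x := by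
  have hexp : HasDerivAt (fun x : ℝ => Real.exp (-x ^ 2 / 2))
      (Real.exp (-x ^ 2 / 2) * (-x)) x := by
    have h1 : HasDerivAt (fun x : ℝ => -x ^ 2 / 2) (-x) x := by
      have := ((hasDerivAt_pow 2 x).neg).div_const 2
      refine this.congr_deriv ?_; push_cast; ring
    exact h1.exp
  have h := (hexp.mul (physHermite_hasDerivAt n x)).div_const ((2:ℝ)^n)
  have hcong : (fun x => psiH n x) = fun x =>
      Real.exp (-x ^ 2 / 2) * physHermite n x / 2 ^ n := by
    funext z; simp [psiH]
  rw [hcong]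
  refine h.congr_deriv ?_
  simp only [psiH, physHermite_succ' n x]
  cases n with
  | zero => simp [physHermite]; ring
  | succ m =>
    simp only [Nat.add_sub_cancel]
    push_cast
    field_simp
    ring

/-- `(∂_x + ∂_y) K_N(x,y) = -(1/(√π 2^{-N+1} (N-1)!)) (ψ_N(x)ψ_{N-1}(y) + ψ_{N-1}(x)ψ_N(y))`. -/
theorem stmt_10 (N : ℕ) (hN : 1 ≤ N) (x y : ℝ) :
    deriv (fun u => kerGUE N u y) x + deriv (fun v => kerGUE N x v) y =
      -(1 / (Real.sqrt Real.pi * (2 : ℝ) ^ (-(N : ℝ) + 1) * (Nat.factorial (N - 1)))) *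
        (psiH N x * psiH (N - 1) y + psiH (N - 1) x * psiH N y) := by
  have hπ : Real.sqrt Real.pi ≠ 0 := ne_of_gt (Real.sqrt_pos.mpr Real.pi_pos)
  set c : ℕ → ℝ := fun n => Real.sqrt Real.pi * (Nat.factorial n) / 2 ^ n with hc
  have hcne : ∀ n, c n ≠ 0 := by
    intro n
    have : (0:ℝ) < Real.sqrt Real.pi * (Nat.factorial n) / 2 ^ n := by
      apply div_pos
      · exact mul_pos (Real.sqrt_pos.mpr Real.pi_pos)
          (by exact_mod_cast Nat.factorial_pos n)
      · positivity
    exact ne_of_gt this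
  -- g is the telescoping sequence
  set g : ℕ → ℝ := fun n =>
    if n = 0 then 0 else
      (psiH n x * psiH (n-1) y + psiH (n-1) x * psiH n y) / c (n-1) with hg
  have dx : HasDerivAt (fun u => kerGUE N u y)
      (∑ n ∈ Finset.range N,
        (-(psiH (n+1) x) + n / 2 * psiH (n-1) x) * psiH n y / c n) x := by
    have heq : (fun u => kerGUE N u y) = fun u => ∑ n ∈ Finset.range N,
        psiH n u * psiH n y / c n := by funext u; rfl
    rw [heq]
    exact HasDerivAt.fun_sum fun n _ => ((psiH_hasDerivAt n x).mul_const _).div_const _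
  have dy : HasDerivAt (fun v => kerGUE N x v)
      (∑ n ∈ Finset.range N,
        psiH n x * (-(psiH (n+1) y) + n / 2 * psiH (n-1) y) / c n) y := by
    have heq : (fun v => kerGUE N x v) = fun v => ∑ n ∈ Finset.range N,
        psiH n x * psiH n v / c n := by funext v; rfl
    rw [heq]
    exact HasDerivAt.fun_sum fun n _ => ((psiH_hasDerivAt n y).const_mul _).div_const _
  rw [dx.deriv, dy.deriv, ← Finset.sum_add_distrib]
  have hterm : ∀ n : ℕ,
      (-(psiH (n+1) x) + n / 2 * psiH (n-1) x) * psiH n y / c n +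
        psiH n x * (-(psiH (n+1) y) + n / 2 * psiH (n-1) y) / c n = g n - g (n+1) := by
    intro n
    cases n with
    | zero =>
      simp only [hg, hc, if_pos rfl, if_neg (Nat.one_ne_zero)]
      simp [Nat.factorial]
      ring
    | succ m =>
      simp only [hg, if_neg (Nat.succ_ne_zero m), if_neg (Nat.succ_ne_zero (m+1)),
        Nat.add_sub_cancel, hc]
      have hf : (Nat.factorial (m+1) : ℝ) = (m+1) * Nat.factorial m := by
        push_cast [Nat.factorial_succ]; ring
      have hfm : (Nat.factorial m : ℝ) ≠ 0 := by exact_mod_cast (Nat.factorial_pos m).ne'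
      rw [hf]
      push_cast
      field_simp
      ring
  rw [Finset.sum_congr rfl (fun n _ => hterm n), Finset.sum_range_sub' g]
  -- now compute g 0 - g N
  obtain ⟨M, rfl⟩ : ∃ M, N = M + 1 := ⟨N - 1, (Nat.succ_pred_eq_of_pos hN).symm⟩
  simp only [hg, if_pos rfl, if_neg (Nat.succ_ne_zero M), Nat.add_sub_cancel, hc]
  have hexp : (-(((M:ℝ))+1) + 1 : ℝ) = -(M:ℝ) := by ring
  have h2 : ((2:ℝ)) ^ (-((M+1:ℕ):ℝ) + 1) = ((2:ℝ) ^ M)⁻¹ := by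
    push_cast
    rw [hexp, Real.rpow_neg (by norm_num), Real.rpow_natCast]
  rw [h2]
  have h2M : ((2:ℝ)^M) ≠ 0 := by positivity
  have hfm : (Nat.factorial M : ℝ) ≠ 0 := by exact_mod_cast (Nat.factorial_pos M).ne'
  field_simp
  ring
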